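/- Every discrete phase-type (PH) distribution on ℕ belongs to F_alg, the class of probability distributions on ℕ given by normalized ℝ₊-algebraic sequences (equivalently, produced by stochastic context-free grammars over a one-letter alphabet). -/

import Mathlib

open Matrix Filter

/-- `p` is a probability distribution on ℕ. -/
def IsProbDist (p : ℕ → ℝ) : Prop :=
  (∀ n, 0 ≤ p n) ∧ HasSum p 1

/-- `p` is a discrete phase-type (PH) distribution on ℕ. -/
def IsPH (p : ℕ → ℝ) : Prop :=
  IsProbDist p ∧
  ∃ m : ℕ, 1 ≤ m ∧
    ∃ (α : Fin m → ℝ) (T : Matrix (Fin m) (Fin m) ℝ),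
      (∀ i, 0 ≤ α i) ∧ (∑ i, α i) ≤ 1 ∧
      (∀ i j, 0 ≤ T i j) ∧ (∀ i, (∑ j, T i j) ≤ 1) ∧
      p 0 = 1 - ∑ i, α i ∧
      ∀ n, 1 ≤ n → p n = α ⬝ᵥ (T ^ (n - 1)).mulVec (fun i => 1 - ∑ j, T i j)

/-- One step of the SCFG fixed-point iteration: substitute the power series
`f W` for the variable `y_W` and `PowerSeries.X` for the variable `z`
(`none` encodes `z`, `some W` encodes `y_W`). -/
noncomputable def grammarStep {V : Type} (P : V → MvPolynomial (Option V) ℝ)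
    (f : V → PowerSeries ℝ) (W : V) : PowerSeries ℝ :=
  MvPolynomial.aeval (fun o : Option V => o.elim PowerSeries.X f) (P W)

/-- The SCFG fixed-point iteration starting from the zero tuple. -/
noncomputable def grammarIter {V : Type} (P : V → MvPolynomial (Option V) ℝ) :
    ℕ → V → PowerSeries ℝ
  | 0 => fun _ => 0
  | k + 1 => grammarStep P (grammarIter P k)

/-- `q` belongs to `F_alg`: `q` is a normalized ℝ₊-algebraic sequence, i.e. it is
produced by a stochastic context-free grammar over a one-letter alphabet.  There
are a finite set `V` of nonterminals with start symbol `S` and polynomials `P W`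
with nonnegative coefficients in the variables `(y_W)` and `z` such that the
fixed-point iteration from the zero tuple converges coefficientwise to a tuple
`f` of power series with nonnegative coefficients satisfying `f_V = P_V(f, z)`,
the coefficients of `f S` have finite positive sum `s`, and `q n = [zⁿ](f S)/s`. -/
def MemFalg (q : ℕ → ℝ) : Prop :=
  ∃ (V : Type) (_ : Fintype V) (S : V) (P : V → MvPolynomial (Option V) ℝ)
    (f : V → PowerSeries ℝ),
    (∀ W d, 0 ≤ MvPolynomial.coeff d (P W)) ∧
    (∀ W (n : ℕ), Tendsto (fun k => PowerSeries.coeff (R := ℝ) n (grammarIter P k W))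
      atTop (nhds (PowerSeries.coeff (R := ℝ) n (f W)))) ∧
    (∀ W, f W = grammarStep P f W) ∧
    (∀ W (n : ℕ), 0 ≤ PowerSeries.coeff (R := ℝ) n (f W)) ∧
    ∃ s : ℝ, HasSum (fun n => PowerSeries.coeff (R := ℝ) n (f S)) s ∧ 0 < s ∧
      ∀ n, q n = PowerSeries.coeff (R := ℝ) n (f S) / s

noncomputable def PHpoly {m : ℕ} (p0 : ℝ) (α : Fin m → ℝ) (T : Matrix (Fin m) (Fin m) ℝ) :
    Option (Fin m) → MvPolynomial (Option (Option (Fin m))) ℝ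
  | none => MvPolynomial.C p0 + ∑ i, MvPolynomial.C (α i) * MvPolynomial.X (some (some i))
  | some i => MvPolynomial.X none *
      (MvPolynomial.C (1 - ∑ j, T i j) +
        ∑ j, MvPolynomial.C (T i j) * MvPolynomial.X (some (some j)))

noncomputable def PHf {m : ℕ} (p : ℕ → ℝ) (T : Matrix (Fin m) (Fin m) ℝ) :
    Option (Fin m) → PowerSeries ℝ
  | none => PowerSeries.mk p
  | some i => PowerSeries.mk fun n => match n with
      | 0 => 0
      | Nat.succ k => (T ^ k).mulVec (fun i' => 1 - ∑ j, T i' j) i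

lemma algebraMap_ps (r : ℝ) : algebraMap ℝ (PowerSeries ℝ) r = PowerSeries.C (R := ℝ) r := rfl

lemma grammarStep_PHpoly_none {m : ℕ} (p0 : ℝ) (α : Fin m → ℝ) (T : Matrix (Fin m) (Fin m) ℝ)
    (g : Option (Fin m) → PowerSeries ℝ) :
    grammarStep (PHpoly p0 α T) g none =
      PowerSeries.C (R := ℝ) p0 + ∑ i, PowerSeries.C (R := ℝ) (α i) * g (some i) := by
  simp [grammarStep, PHpoly, algebraMap_ps]

lemma grammarStep_PHpoly_some {m : ℕ} (p0 : ℝ) (α : Fin m → ℝ) (T : Matrix (Fin m) (Fin m) ℝ)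
    (g : Option (Fin m) → PowerSeries ℝ) (i : Fin m) :
    grammarStep (PHpoly p0 α T) g (some i) =
      PowerSeries.X * (PowerSeries.C (R := ℝ) (1 - ∑ j, T i j) +
        ∑ j, PowerSeries.C (R := ℝ) (T i j) * g (some j)) := by
  simp [grammarStep, PHpoly, algebraMap_ps]

/-- Every discrete PH distribution on ℕ belongs to `F_alg`. -/
theorem ph_mem_falg (p : ℕ → ℝ) (hp : IsPH p) : MemFalg p := by
  obtain ⟨⟨hpos, hsum⟩, m, hm, α, T, hα, hαsum, hT, hTrow, hp0, hpn⟩ := hp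
  set t : Fin m → ℝ := fun i => 1 - ∑ j, T i j with ht
  set P := PHpoly (p 0) α T with hP
  set F := PHf p T with hF
  have ht0 : ∀ i, 0 ≤ t i := fun i => by simpa [ht] using hTrow i
  have hpow : ∀ (k : ℕ) i j, 0 ≤ (T ^ k) i j := by
    intro k
    induction k with
    | zero => intro i j; simp [Matrix.one_apply]; positivity
    | succ k ih =>
      intro i j
      rw [pow_succ, Matrix.mul_apply]
      exact Finset.sum_nonneg fun l _ => mul_nonneg (ih i l) (hT l j)
  -- coefficients of F
  have hFnone : ∀ n, PowerSeries.coeff (R := ℝ) n (F none) = p n := by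
    intro n; simp [hF, PHf]
  have hFsome0 : ∀ i, PowerSeries.coeff (R := ℝ) 0 (F (some i)) = 0 := by
    intro i; simp [hF, PHf]
  have hFsomeS : ∀ i k, PowerSeries.coeff (R := ℝ) (k + 1) (F (some i)) = (T ^ k).mulVec t i := by
    intro i k; simp [hF, PHf, ht]
  -- nonnegativity of coefficients of F
  have hFnonneg : ∀ W n, 0 ≤ PowerSeries.coeff (R := ℝ) n (F W) := by
    rintro (_ | i) n
    · rw [hFnone]; exact hpos n
    · cases n with
      | zero => rw [hFsome0]
      | succ k =>
        rw [hFsomeS]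
        simp only [Matrix.mulVec, dotProduct]
        exact Finset.sum_nonneg fun j _ => mul_nonneg (hpow k i j) (ht0 j)
  -- the fixed-point property
  have hfix : ∀ W, F W = grammarStep P F W := by
    rintro (_ | i)
    · rw [hP, grammarStep_PHpoly_none]
      ext n
      rw [hFnone, map_add, map_sum]
      cases n with
      | zero =>
        simp only [PowerSeries.coeff_C_mul, hFsome0, PowerSeries.coeff_zero_C]
        simp [hp0, ht]
      | succ k =>
        simp only [PowerSeries.coeff_C_mul, hFsomeS, PowerSeries.coeff_C]
        rw [hpn (k + 1) (by omega)]
        simp [dotProduct, ht]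
    · rw [hP, grammarStep_PHpoly_some]
      ext n
      cases n with
      | zero => rw [hFsome0, PowerSeries.coeff_zero_X_mul]
      | succ k =>
        rw [hFsomeS, PowerSeries.coeff_succ_X_mul, map_add, map_sum]
        simp only [PowerSeries.coeff_C_mul, PowerSeries.coeff_C]
        cases k with
        | zero =>
          simp [hFsome0, Matrix.mulVec, dotProduct, ht, Matrix.one_apply,
            ite_mul, Finset.sum_ite_eq]
        | succ l =>
          simp only [hFsomeS, Nat.succ_ne_zero, if_false, zero_add]
          rw [pow_succ']
          rw [← Matrix.mulVec_mulVec]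
          simp [Matrix.mulVec, dotProduct]
  -- nonnegativity of the polynomial coefficients
  have hPnonneg : ∀ W d, 0 ≤ MvPolynomial.coeff d (P W) := by
    have haff : ∀ (a : ℝ) (c : Fin m → ℝ), 0 ≤ a → (∀ i, 0 ≤ c i) →
        ∀ d, 0 ≤ MvPolynomial.coeff d
          (MvPolynomial.C a + ∑ i, MvPolynomial.C (c i) *
            (MvPolynomial.X (some (some i)) : MvPolynomial (Option (Option (Fin m))) ℝ)) := by
      intro a c ha hc d
      rw [MvPolynomial.coeff_add, MvPolynomial.coeff_sum]
      apply add_nonneg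
      · rw [MvPolynomial.coeff_C]; positivity
      · apply Finset.sum_nonneg
        intro i _
        rw [MvPolynomial.coeff_C_mul, MvPolynomial.coeff_X']
        have := hc i
        positivity
    rintro (_ | i) d
    · exact haff (p 0) α (by rw [hp0]; linarith) hα d
    · show 0 ≤ MvPolynomial.coeff d (MvPolynomial.X none * _)
      rw [MvPolynomial.coeff_X_mul']
      split
      · exact haff (t i) (T i) (ht0 i) (hT i) _
      · exact le_refl 0
  -- the iteration stabilizes
  have hiter : ∀ k : ℕ,
      (∀ n ≤ k, PowerSeries.coeff (R := ℝ) n (grammarIter P (k + 1) none) =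
        PowerSeries.coeff (R := ℝ) n (F none)) ∧
      (∀ i, ∀ n ≤ k + 1, PowerSeries.coeff (R := ℝ) n (grammarIter P (k + 1) (some i)) =
        PowerSeries.coeff (R := ℝ) n (F (some i))) := by
    intro k
    induction k with
    | zero =>
      constructor
      · intro n hn
        interval_cases n
        show PowerSeries.coeff (R := ℝ) 0 (grammarStep P (grammarIter P 0) none) = _
        rw [hP, grammarStep_PHpoly_none, hFnone, map_add, map_sum]
        simp [grammarIter, hp0, ht]
      · intro i n hn
        show PowerSeries.coeff (R := ℝ) n (grammarStep P (grammarIter P 0) (some i)) = _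
        rw [hP, grammarStep_PHpoly_some]
        interval_cases n
        · rw [hFsome0, PowerSeries.coeff_zero_X_mul]
        · rw [hFsomeS, PowerSeries.coeff_succ_X_mul, map_add, map_sum]
          simp [grammarIter, Matrix.mulVec, dotProduct, ht, Matrix.one_apply,
            ite_mul, Finset.sum_ite_eq, Finset.sum_ite_eq']
    | succ k ih =>
      constructor
      · intro n hn
        show PowerSeries.coeff (R := ℝ) n (grammarStep P (grammarIter P (k + 1)) none) = _
        rw [hP, grammarStep_PHpoly_none, map_add, map_sum]
        conv_rhs => rw [hfix none, hP, grammarStep_PHpoly_none, map_add, map_sum]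
        congr 1
        apply Finset.sum_congr rfl
        intro i _
        rw [PowerSeries.coeff_C_mul, PowerSeries.coeff_C_mul, ih.2 i n (by omega)]
      · intro i n hn
        show PowerSeries.coeff (R := ℝ) n (grammarStep P (grammarIter P (k + 1)) (some i)) = _
        rw [hP, grammarStep_PHpoly_some]
        conv_rhs => rw [hfix (some i), hP, grammarStep_PHpoly_some]
        cases n with
        | zero => rw [PowerSeries.coeff_zero_X_mul, PowerSeries.coeff_zero_X_mul]
        | succ l =>
          rw [PowerSeries.coeff_succ_X_mul, PowerSeries.coeff_succ_X_mul,
            map_add, map_sum, map_add, map_sum]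
          congr 1
          apply Finset.sum_congr rfl
          intro j _
          rw [PowerSeries.coeff_C_mul, PowerSeries.coeff_C_mul, ih.2 j l (by omega)]
  refine ⟨Option (Fin m), inferInstance, none, P, F, hPnonneg, ?_, hfix, hFnonneg,
    1, by simpa [funext hFnone] using hsum, one_pos, fun n => by rw [hFnone, div_one]⟩
  rintro (_ | i) n
  · apply tendsto_atTop_of_eventually_const (i₀ := n + 1)
    intro k hk
    obtain ⟨j, rfl⟩ : ∃ j, k = j + 1 := ⟨k - 1, by omega⟩
    exact (hiter j).1 n (by omega)
  · apply tendsto_atTop_of_eventually_const (i₀ := n + 1)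
    intro k hk
    obtain ⟨j, rfl⟩ : ∃ j, k = j + 1 := ⟨k - 1, by omega⟩
    exact (hiter j).2 i n (by omega)
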